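/- arXiv:2603.22664 — 3 statements merged into one kernel-verified Lean document; each statement's English description precedes it below -/
import Mathlib

section
/- Let p ≥ 1 and d ∈ ℕ. Then C_{n,p,d}²/C_{n,p,2d} = (n(n+2d)/(n+d)²) · Γ(n/p)Γ((n+2d)/p)/Γ((n+d)/p)², and there exist constants K ≥ 0 and N ∈ ℕ depending only on p and d such that for every n ≥ N: |C_{n,p,d}²/C_{n,p,2d} − 1 − d²/(pn)| ≤ K/n². -/
open MeasureTheory

noncomputable section

/-- Variance of a real function with respect to a measure. -/
def mVar {α : Type*} [MeasurableSpace α] (μ : Measure α) (f : α → ℝ) : ℝ :=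
  (∫ x, f x ^ 2 ∂μ) - (∫ x, f x ∂μ) ^ 2

/-- `coeffNorm d f` is `coeff_d(f)`, the ℓ² norm of the coefficients of the degree-`d`
homogeneous part of `f`. -/
def coeffNorm {n : ℕ} (d : ℕ) (f : MvPolynomial (Fin n) ℝ) : ℝ :=
  Real.sqrt (∑ I ∈ f.support.filter (fun I => (I.sum fun _ e => e) = d),
    (MvPolynomial.coeff I f) ^ 2)

/-- The isotropic radius `R_{n,p}`. -/
def Rnp (n : ℕ) (p : ℝ) : ℝ :=
  Real.sqrt ((((n : ℝ) + 2) / n) * (Real.Gamma (((n : ℝ) + 2) / p) / Real.Gamma ((n : ℝ) / p)) *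
    (Real.Gamma (1 / p) / Real.Gamma (3 / p)))

/-- The isotropic `L^p` ball `B_{n,p}` in ℝ^n. -/
def lpBall (n : ℕ) (p : ℝ) : Set (Fin n → ℝ) :=
  {x | ∑ i, |x i| ^ p ≤ Rnp n p ^ p}

/-- `μ_{n,p}`, the uniform probability measure on the isotropic `L^p` ball. -/
def muNP (n : ℕ) (p : ℝ) : Measure (Fin n → ℝ) :=
  (volume (lpBall n p))⁻¹ • volume.restrict (lpBall n p)

/-- The proportionality constant `C_{n,p,d} = R_{n,p}^d (n/(n+d)) Γ(n/p)/Γ((n+d)/p)`. -/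
def Cnpd (n : ℕ) (p : ℝ) (d : ℕ) : ℝ :=
  Rnp n p ^ d * ((n : ℝ) / ((n : ℝ) + d)) *
    (Real.Gamma ((n : ℝ) / p) / Real.Gamma (((n : ℝ) + d) / p))

section AuxLemmas

open Filter Finset Real Topology

private lemma aux_one_add_sum_le_prod (s : Finset ℕ) (w : ℕ → ℝ) (h : ∀ i ∈ s, 0 ≤ w i) :
    1 + ∑ i ∈ s, w i ≤ ∏ i ∈ s, (1 + w i) := by
  classical
  induction s using Finset.induction_on with
  | empty => simp
  | @insert a s hs ih =>
    rw [Finset.sum_insert hs, Finset.prod_insert hs]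
    have h1 : 0 ≤ w a := h a (Finset.mem_insert_self _ _)
    have h2 : ∀ i ∈ s, 0 ≤ w i := fun i hi => h i (Finset.mem_insert_of_mem hi)
    have h3 := ih h2
    nlinarith [Finset.sum_nonneg h2]

private lemma aux_prod_le_exp (s : Finset ℕ) (w : ℕ → ℝ) (h : ∀ i ∈ s, 0 ≤ w i) :
    ∏ i ∈ s, (1 + w i) ≤ Real.exp (∑ i ∈ s, w i) := by
  rw [Real.exp_sum]
  refine Finset.prod_le_prod (fun i hi => by linarith [h i hi]) (fun i hi => ?_)
  linarith [Real.add_one_le_exp (w i)]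

private lemma aux_prod_tendsto (x a : ℝ) (hx : 0 < x) (ha : 0 ≤ a) :
    Tendsto (fun n : ℕ => ∏ j ∈ Finset.range (n+1), (1 + a^2/((x+j)*(x+2*a+j)))) atTop
      (𝓝 (Real.Gamma x * Real.Gamma (x+2*a) / Real.Gamma (x+a)^2)) := by
  have hxa : 0 < x + a := by linarith
  have hT : Tendsto (fun n => Real.GammaSeq x n * Real.GammaSeq (x+2*a) n / Real.GammaSeq (x+a) n ^ 2)
      atTop (𝓝 (Real.Gamma x * Real.Gamma (x+2*a) / Real.Gamma (x+a)^2)) :=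
    ((Real.GammaSeq_tendsto_Gamma x).mul (Real.GammaSeq_tendsto_Gamma (x+2*a))).div
      (((Real.GammaSeq_tendsto_Gamma (x+a))).pow 2) (pow_ne_zero 2 (Real.Gamma_pos_of_pos hxa).ne')
  apply hT.congr'
  filter_upwards [eventually_ge_atTop 1] with n hn
  have npos : (0:ℝ) < (n:ℝ) := by exact_mod_cast hn
  have hprod : ∏ j ∈ Finset.range (n+1), (1 + a^2/((x+j)*(x+2*a+j)))
      = (∏ j ∈ Finset.range (n+1), (x+a+j))^2 /
        ((∏ j ∈ Finset.range (n+1), (x+j)) * ∏ j ∈ Finset.range (n+1), (x+2*a+j)) := by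
    rw [← Finset.prod_pow, ← Finset.prod_mul_distrib, ← Finset.prod_div_distrib]
    refine Finset.prod_congr rfl (fun j hj => ?_)
    have h1 : 0 < x + (j:ℝ) := by positivity
    have h2 : 0 < x + 2*a + (j:ℝ) := by positivity
    field_simp
    ring
  rw [hprod]
  simp only [Real.GammaSeq]
  have hpow : (n:ℝ)^x * (n:ℝ)^(x+2*a) = ((n:ℝ)^(x+a))^2 := by
    rw [sq, ← Real.rpow_add npos, ← Real.rpow_add npos]; ring_nf
  have hPx : (0:ℝ) < ∏ j ∈ Finset.range (n+1), (x+(j:ℝ)) :=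
    Finset.prod_pos (fun j hj => by positivity)
  have hP1 : (0:ℝ) < ∏ j ∈ Finset.range (n+1), (x+a+(j:ℝ)) :=
    Finset.prod_pos (fun j hj => by positivity)
  have hP2 : (0:ℝ) < ∏ j ∈ Finset.range (n+1), (x+2*a+(j:ℝ)) :=
    Finset.prod_pos (fun j hj => by positivity)
  have hfact : (0:ℝ) < ((n.factorial : ℕ) : ℝ) := by exact_mod_cast Nat.factorial_pos n
  have hB : (0:ℝ) < (n:ℝ)^(x+a) := Real.rpow_pos_of_pos npos _
  field_simp
  linear_combination hpow

private lemma aux_gamma_ratio_bounds (x a : ℝ) (ha : 0 ≤ a) (hx : a^2 + 2 ≤ x) :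
    1 + a^2/(x+2*a) ≤ Real.Gamma x * Real.Gamma (x+2*a) / Real.Gamma (x+a)^2 ∧
    Real.Gamma x * Real.Gamma (x+2*a) / Real.Gamma (x+a)^2 ≤ 1 + a^2/(x-1) + (a^2/(x-1))^2 := by
  have ha2 : 0 ≤ a^2 := sq_nonneg a
  have hx0 : (0:ℝ) < x := by nlinarith
  have hx1 : (1:ℝ) ≤ x - 1 := by nlinarith
  set w : ℕ → ℝ := fun j => a^2/((x+j)*(x+2*a+j)) with hw
  have hwnn : ∀ j : ℕ, 0 ≤ w j := fun j => by
    have h1 : (0:ℝ) < x + j := by positivity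
    have h2 : (0:ℝ) < x + 2*a + j := by positivity
    positivity
  have hT := aux_prod_tendsto x a hx0 ha
  have hsum_up : ∀ n : ℕ, ∑ j ∈ Finset.range n, w j ≤ a^2/(x-1) := by
    intro n
    have key : ∀ j : ℕ, w j ≤ a^2/(x-1+j) - a^2/(x-1+(j+1:ℕ)) := by
      intro j
      have h1 : (0:ℝ) < x - 1 + j := by positivity
      have h2 : (0:ℝ) < x + j := by positivity
      have h3 : (0:ℝ) < x + 2*a + j := by positivity
      have heq : a^2/(x-1+j) - a^2/(x-1+((j:ℝ)+1)) = a^2/((x-1+j)*(x+j)) := by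
        rw [div_sub_div _ _ (ne_of_gt h1) (by push_cast; linarith)]
        congr 1 <;> ring
      push_cast
      rw [heq]
      simp only [hw]
      refine div_le_div_of_nonneg_left ha2 (by positivity) ?_
      nlinarith
    calc ∑ j ∈ Finset.range n, w j
        ≤ ∑ j ∈ Finset.range n, (a^2/(x-1+j) - a^2/(x-1+(j+1:ℕ))) :=
          Finset.sum_le_sum (fun j _ => key j)
      _ = a^2/(x-1+(0:ℕ)) - a^2/(x-1+n) := by
          rw [Finset.sum_range_sub' (fun j => a^2/(x-1+(j:ℕ)))]
      _ ≤ a^2/(x-1) := by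
          have : (0:ℝ) ≤ a^2/(x-1+n) := by positivity
          simp only [Nat.cast_zero, add_zero]
          linarith
  have hsum_lo : ∀ n : ℕ, a^2/(x+2*a) - a^2/(x+2*a+n) ≤ ∑ j ∈ Finset.range n, w j := by
    intro n
    have key : ∀ j : ℕ, a^2/(x+2*a+j) - a^2/(x+2*a+(j+1:ℕ)) ≤ w j := by
      intro j
      have h1 : (0:ℝ) < x + j := by positivity
      have h2 : (0:ℝ) < x + 2*a + j := by positivity
      have h3 : (0:ℝ) < x + 2*a + j + 1 := by linarith
      have heq : a^2/(x+2*a+j) - a^2/(x+2*a+((j:ℝ)+1)) = a^2/((x+2*a+j)*(x+2*a+j+1)) := by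
        rw [div_sub_div _ _ (ne_of_gt h2) (by push_cast; linarith)]
        congr 1 <;> ring
      push_cast
      rw [heq]
      simp only [hw]
      refine div_le_div_of_nonneg_left ha2 (by positivity) ?_
      nlinarith
    calc a^2/(x+2*a) - a^2/(x+2*a+n)
        = a^2/(x+2*a+(0:ℕ)) - a^2/(x+2*a+n) := by norm_num
      _ = ∑ j ∈ Finset.range n, (a^2/(x+2*a+j) - a^2/(x+2*a+(j+1:ℕ))) :=
          (Finset.sum_range_sub' (fun j => a^2/(x+2*a+(j:ℕ))) n).symm
      _ ≤ ∑ j ∈ Finset.range n, w j := Finset.sum_le_sum (fun j _ => key j)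
  constructor
  · have hlowT : Tendsto (fun n : ℕ => 1 + (a^2/(x+2*a) - a^2/(x+2*a+((n:ℝ)+1)))) atTop
        (𝓝 (1 + (a^2/(x+2*a) - 0))) := by
      refine tendsto_const_nhds.add (tendsto_const_nhds.sub ?_)
      have hA : Tendsto (fun n : ℕ => x+2*a+((n:ℝ)+1)) atTop atTop :=
        tendsto_atTop_add_const_left _ _
          (tendsto_atTop_add_const_right _ 1 tendsto_natCast_atTop_atTop)
      have := hA.inv_tendsto_atTop.const_mul (a^2)
      simpa [div_eq_mul_inv, mul_zero] using this
    have hle : ∀ n : ℕ, 1 + (a^2/(x+2*a) - a^2/(x+2*a+((n:ℝ)+1)))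
        ≤ ∏ j ∈ Finset.range (n+1), (1 + w j) := by
      intro n
      have h1 := hsum_lo (n+1)
      have h2 := aux_one_add_sum_le_prod (Finset.range (n+1)) w (fun i _ => hwnn i)
      push_cast at h1 ⊢
      linarith
    have := le_of_tendsto_of_tendsto' hlowT hT hle
    simpa using this
  · set t := a^2/(x-1) with htdef
    have ht0 : 0 ≤ t := by positivity
    have ht1 : t ≤ 1 := by
      rw [htdef, div_le_one (by linarith)]; nlinarith
    have hup : Real.Gamma x * Real.Gamma (x+2*a) / Real.Gamma (x+a)^2 ≤ Real.exp t := by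
      refine le_of_tendsto hT (Filter.Eventually.of_forall (fun n => ?_))
      calc ∏ j ∈ Finset.range (n+1), (1 + w j)
          ≤ Real.exp (∑ j ∈ Finset.range (n+1), w j) :=
            aux_prod_le_exp _ _ (fun i _ => hwnn i)
        _ ≤ Real.exp t := Real.exp_le_exp.2 (hsum_up (n+1))
    have hexp : Real.exp t ≤ 1 + t + t^2 := by
      have hb := Real.exp_bound (x := t) (abs_le.mpr ⟨by linarith, ht1⟩) (by norm_num : 0 < 2)
      rw [abs_le] at hb
      have h2 := hb.2
      simp [Finset.sum_range_succ, abs_of_nonneg ht0] at h2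
      nlinarith [sq_nonneg t]
    linarith

private lemma aux_formula (p : ℝ) (hp : 1 ≤ p) (d : ℕ) (n : ℕ) :
    Cnpd n p d ^ 2 / Cnpd n p (2 * d)
      = ((n : ℝ) * ((n : ℝ) + 2 * d) / ((n : ℝ) + d) ^ 2) *
        (Real.Gamma ((n : ℝ) / p) * Real.Gamma (((n : ℝ) + 2 * d) / p) /
          Real.Gamma (((n : ℝ) + d) / p) ^ 2) := by
  have hp0 : (0:ℝ) < p := lt_of_lt_of_le one_pos hp
  rcases Nat.eq_zero_or_pos n with rfl | hn
  · rcases Nat.eq_zero_or_pos d with rfl | hd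
    · simp [Cnpd]
    · have hd0 : (0:ℝ) < (d:ℝ) := by exact_mod_cast hd
      simp [Cnpd, hd0.ne']
  · have hn0 : (0:ℝ) < (n:ℝ) := by exact_mod_cast hn
    have hd0 : (0:ℝ) ≤ (d:ℝ) := by positivity
    have gA := Real.Gamma_pos_of_pos (show (0:ℝ) < (n:ℝ)/p by positivity)
    have gB := Real.Gamma_pos_of_pos (show (0:ℝ) < ((n:ℝ)+d)/p by positivity)
    have gC := Real.Gamma_pos_of_pos (show (0:ℝ) < ((n:ℝ)+2*d)/p by positivity)
    have g1 := Real.Gamma_pos_of_pos (show (0:ℝ) < ((n:ℝ)+2)/p by positivity)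
    have g2 := Real.Gamma_pos_of_pos (show (0:ℝ) < 1/p by positivity)
    have g3 := Real.Gamma_pos_of_pos (show (0:ℝ) < 3/p by positivity)
    have hR : 0 < Rnp n p := Real.sqrt_pos.2 (by positivity)
    have hnd : (0:ℝ) < (n:ℝ) + d := by linarith
    have hn2d : (0:ℝ) < (n:ℝ) + 2*d := by linarith
    unfold Cnpd
    push_cast
    rw [show Rnp n p ^ (2*d) = (Rnp n p ^ d)^2 by rw [pow_mul']]
    field_simp

end AuxLemmas

set_option maxHeartbeats 1000000 in
/-- Lemma 2.5: the explicit formula for `C_{n,p,d}²/C_{n,p,2d}`, and its asymptotic expansion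
`1 + d²/(pn) + O_{p,d}(n⁻²)`. -/
theorem asymptotics_of_Cnpd_ratio (p : ℝ) (hp : 1 ≤ p) (d : ℕ) :
    (∀ n : ℕ, Cnpd n p d ^ 2 / Cnpd n p (2 * d)
      = ((n : ℝ) * ((n : ℝ) + 2 * d) / ((n : ℝ) + d) ^ 2) *
        (Real.Gamma ((n : ℝ) / p) * Real.Gamma (((n : ℝ) + 2 * d) / p) /
          Real.Gamma (((n : ℝ) + d) / p) ^ 2)) ∧
    (∃ K : ℝ, 0 ≤ K ∧ ∃ N : ℕ, ∀ n : ℕ, N ≤ n →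
      |Cnpd n p d ^ 2 / Cnpd n p (2 * d) - 1 - (d : ℝ) ^ 2 / (p * n)| ≤ K / (n : ℝ) ^ 2) := by
  have hp0 : (0:ℝ) < p := lt_of_lt_of_le one_pos hp
  refine ⟨aux_formula p hp d, ?_⟩
  set a : ℝ := (d : ℝ) / p with hadef
  have ha : 0 ≤ a := by positivity
  clear_value a
  refine ⟨3*(d:ℝ)^2 + (2*a^2+2*a^3+4*a^4)*p^2, by positivity, ⌈p*(a^2+2)⌉₊ + 1, fun n hn => ?_⟩
  have hn1 : 1 ≤ n := le_trans (Nat.le_add_left 1 _) hn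
  have hn0 : (0:ℝ) < (n:ℝ) := by exact_mod_cast hn1
  have hd0 : (0:ℝ) ≤ (d:ℝ) := by positivity
  have hnN : p*(a^2+2) ≤ (n:ℝ) := by
    calc p*(a^2+2) ≤ (⌈p*(a^2+2)⌉₊ : ℝ) := Nat.le_ceil _
      _ ≤ (n:ℝ) := by exact_mod_cast le_trans (Nat.le_add_right _ 1) hn
  set x : ℝ := (n:ℝ)/p with hxdef
  clear_value x
  have hx : a^2 + 2 ≤ x := by
    rw [hxdef, le_div_iff₀ hp0]; linarith [mul_comm p (a^2+2)]
  have hx0 : (0:ℝ) < x := by nlinarith [sq_nonneg a]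
  have hx2 : (2:ℝ) ≤ x := by nlinarith [sq_nonneg a]
  obtain ⟨hLlo, hLup⟩ := aux_gamma_ratio_bounds x a ha hx
  -- rewrite the Gamma arguments
  have e1 : ((n:ℝ)+d)/p = x + a := by rw [hxdef, hadef, add_div]
  have e2 : ((n:ℝ)+2*d)/p = x + 2*a := by rw [hxdef, hadef, add_div]; ring
  rw [aux_formula p hp d n, e1, e2, ← hxdef]
  set L : ℝ := Real.Gamma x * Real.Gamma (x+2*a) / Real.Gamma (x+a)^2 with hLdef
  set P : ℝ := (n:ℝ) * ((n:ℝ) + 2*d) / ((n:ℝ)+d)^2 with hPdef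
  clear_value L P
  -- basic facts
  have hnd : (0:ℝ) < (n:ℝ) + d := by linarith
  have hL0 : 0 ≤ L := by
    have : (0:ℝ) ≤ a^2/(x+2*a) := by positivity
    linarith
  have ht1 : a^2/(x-1) ≤ 1 := by
    rw [div_le_one (by linarith)]; nlinarith [sq_nonneg a]
  have ht0 : 0 ≤ a^2/(x-1) := div_nonneg (sq_nonneg a) (by linarith)
  have hL3 : L ≤ 3 := by nlinarith
  have hPle : P ≤ 1 := by
    rw [hPdef, div_le_one (by positivity)]; nlinarith [sq_nonneg (d:ℝ)]
  have hPge : 1 - (d:ℝ)^2/(n:ℝ)^2 ≤ P := by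
    have h1 : 1 - P = (d:ℝ)^2/((n:ℝ)+d)^2 := by
      rw [hPdef]; field_simp; ring
    have h2 : (d:ℝ)^2/((n:ℝ)+d)^2 ≤ (d:ℝ)^2/(n:ℝ)^2 :=
      div_le_div_of_nonneg_left (sq_nonneg (d:ℝ)) (show (0:ℝ) < (n:ℝ)^2 by positivity)
        (pow_le_pow_left₀ hn0.le (by linarith) 2)
    linarith
  -- the key div inequalities
  have hiup : a^2/(x-1) + (a^2/(x-1))^2 - a^2/x ≤ (2*a^2+4*a^4)/x^2 := by
    have k1 : a^2/(x-1) - a^2/x ≤ 2*a^2/x^2 := by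
      rw [div_sub_div _ _ (ne_of_gt (by linarith : (0:ℝ) < x-1)) (ne_of_gt hx0),
        div_le_div_iff₀ (by nlinarith) (by positivity)]
      nlinarith [mul_nonneg (mul_nonneg (sq_nonneg a) hx0.le) (by linarith : (0:ℝ) ≤ x-2)]
    have k2 : (a^2/(x-1))^2 ≤ 4*a^4/x^2 := by
      rw [div_pow, div_le_div_iff₀ (by nlinarith) (by positivity)]
      nlinarith [sq_nonneg a, sq_nonneg (a^2*(x-2)), sq_nonneg (x-2)]
    have : 2*a^2/x^2 + 4*a^4/x^2 = (2*a^2+4*a^4)/x^2 := by ring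
    linarith
  have hilo : a^2/x - a^2/(x+2*a) ≤ 2*a^3/x^2 := by
    rw [div_sub_div _ _ (ne_of_gt hx0) (by positivity : x+2*a ≠ 0),
      div_le_div_iff₀ (by positivity) (by positivity)]
    nlinarith [mul_nonneg (mul_nonneg (mul_nonneg (mul_nonneg ha ha) ha) ha) hx0.le]
  -- deviations
  have hPL_up : P*L - 1 - a^2/x ≤ (2*a^2+4*a^4)/x^2 := by
    have : P*L ≤ L := by nlinarith
    linarith
  have hPL_lo : -(2*a^3/x^2 + 3*(d:ℝ)^2/(n:ℝ)^2) ≤ P*L - 1 - a^2/x := by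
    have h1 : (1 - (d:ℝ)^2/(n:ℝ)^2)*L ≤ P*L := mul_le_mul_of_nonneg_right hPge hL0
    have h2 : (1 - (d:ℝ)^2/(n:ℝ)^2)*L = L - ((d:ℝ)^2/(n:ℝ)^2)*L := by ring
    have h3 : ((d:ℝ)^2/(n:ℝ)^2)*L ≤ 3*(d:ℝ)^2/(n:ℝ)^2 := by
      have hq : (0:ℝ) ≤ (d:ℝ)^2/(n:ℝ)^2 := by positivity
      have he : 3*(d:ℝ)^2/(n:ℝ)^2 = 3*((d:ℝ)^2/(n:ℝ)^2) := by ring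
      nlinarith [mul_nonneg hq (by linarith : (0:ℝ) ≤ 3 - L)]
    linarith
  -- conversion to /n²
  have hc1 : (2*a^2+4*a^4)/x^2 = (2*a^2+4*a^4)*p^2/(n:ℝ)^2 := by
    rw [hxdef]; field_simp
  have hc2 : 2*a^3/x^2 = 2*a^3*p^2/(n:ℝ)^2 := by
    rw [hxdef]; field_simp
  have hc3 : a^2/x = (d:ℝ)^2/(p*(n:ℝ)) := by
    rw [hxdef, hadef]; field_simp
  rw [← hc3]
  rw [abs_le]
  have hnn2 : (0:ℝ) < (n:ℝ)^2 := by positivity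
  constructor
  · have hK : (3*(d:ℝ)^2 + (2*a^2+2*a^3+4*a^4)*p^2) / (n:ℝ)^2
        = 3*(d:ℝ)^2/(n:ℝ)^2 + (2*a^2+2*a^3+4*a^4)*p^2/(n:ℝ)^2 := by ring
    rw [hK]
    have hnn : (0:ℝ) ≤ (2*a^2+4*a^4)*p^2/(n:ℝ)^2 := by positivity
    have : 2*a^3*p^2/(n:ℝ)^2 + (2*a^2+4*a^4)*p^2/(n:ℝ)^2
        = (2*a^2+2*a^3+4*a^4)*p^2/(n:ℝ)^2 := by ring
    rw [hc2] at hPL_lo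
    linarith
  · have hK : (3*(d:ℝ)^2 + (2*a^2+2*a^3+4*a^4)*p^2) / (n:ℝ)^2
        = 3*(d:ℝ)^2/(n:ℝ)^2 + (2*a^2+2*a^3+4*a^4)*p^2/(n:ℝ)^2 := by ring
    rw [hK]
    have h1 : (0:ℝ) ≤ 3*(d:ℝ)^2/(n:ℝ)^2 := by positivity
    have h2 : (0:ℝ) ≤ 2*a^3*p^2/(n:ℝ)^2 := by positivity
    have : (2*a^2+4*a^4)*p^2/(n:ℝ)^2 + 2*a^3*p^2/(n:ℝ)^2
        = (2*a^2+2*a^3+4*a^4)*p^2/(n:ℝ)^2 := by ring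
    rw [hc1] at hPL_up
    linarith
end
end

section
/- Let d ≥ 1, p ≥ 1, n ∈ ℕ, and let f : ℝ^n → ℝ be a degree-d homogeneous polynomial. Then Cov_{μ_{n,p}}(f, x ↦ ‖x‖_p^d) = R_{n,p}^d · (d²/((n+2d)(n+d))) · ∫ f dμ_{n,p}, where ‖x‖_p := (Σ_{i=1}^n |x_i|^p)^{1/p}. -/
open MeasureTheory Set

noncomputable section

/-- generalized lp ball of radius r (auxiliary) -/
def ball' (n : ℕ) (p : ℝ) (r : ℝ) : Set (Fin n → ℝ) :=
  {x | ∑ i, |x i| ^ p ≤ r ^ p}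
lemma Rnp_pos {n : ℕ} {p : ℝ} (hn : 1 ≤ n) (hp : 1 ≤ p) : 0 < Rnp n p := by
  have hp0 : 0 < p := lt_of_lt_of_le one_pos hp
  have hn0 : (0:ℝ) < n := by exact_mod_cast hn
  apply Real.sqrt_pos.mpr
  apply mul_pos (mul_pos (div_pos (by linarith) hn0)
    (div_pos (Real.Gamma_pos_of_pos (div_pos (by linarith) hp0))
      (Real.Gamma_pos_of_pos (div_pos hn0 hp0))))
    (div_pos (Real.Gamma_pos_of_pos (div_pos one_pos hp0))
      (Real.Gamma_pos_of_pos (div_pos (by norm_num) hp0)))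

lemma sum_abs_rpow_nonneg {n : ℕ} (p : ℝ) (x : Fin n → ℝ) :
    0 ≤ ∑ i, |x i| ^ p :=
  Finset.sum_nonneg fun _ _ => Real.rpow_nonneg (abs_nonneg _) _

lemma continuous_sum_abs_rpow {n : ℕ} {p : ℝ} (hp : 0 ≤ p) :
    Continuous fun x : Fin n → ℝ => ∑ i, |x i| ^ p :=
  continuous_finset_sum _ fun i _ =>
    ((continuous_apply i).abs).rpow_const fun _ => Or.inr hp

lemma sum_abs_rpow_smul {n : ℕ} {p : ℝ} {c : ℝ} (hc : 0 ≤ c)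
    (x : Fin n → ℝ) :
    ∑ i, |(c • x) i| ^ p = c ^ p * ∑ i, |x i| ^ p := by
  rw [Finset.mul_sum]
  refine Finset.sum_congr rfl fun i _ => ?_
  rw [Pi.smul_apply, smul_eq_mul, abs_mul, abs_of_nonneg hc,
    Real.mul_rpow hc (abs_nonneg _)]

lemma isClosed_ball' {n : ℕ} {p : ℝ} (hp : 0 ≤ p) (r : ℝ) :
    IsClosed (ball' n p r) :=
  isClosed_le (continuous_sum_abs_rpow hp) continuous_const

lemma measurableSet_ball' {n : ℕ} {p : ℝ} (hp : 0 ≤ p) (r : ℝ) :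
    MeasurableSet (ball' n p r) :=
  (isClosed_ball' hp r).measurableSet

lemma ball'_subset_closedBall {n : ℕ} {p : ℝ} (hp : 0 < p) {r : ℝ} (hr : 0 ≤ r) :
    ball' n p r ⊆ Metric.closedBall 0 r := by
  intro x hx
  rw [Metric.mem_closedBall, dist_zero_right, pi_norm_le_iff_of_nonneg hr]
  intro i
  rw [Real.norm_eq_abs]
  rw [← Real.rpow_le_rpow_iff (abs_nonneg _) hr hp]
  refine le_trans ?_ hx
  exact Finset.single_le_sum (fun j _ => Real.rpow_nonneg (abs_nonneg _) _)
    (Finset.mem_univ i)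

lemma isCompact_ball' {n : ℕ} {p : ℝ} (hp : 0 < p) {r : ℝ} (hr : 0 ≤ r) :
    IsCompact (ball' n p r) :=
  (isCompact_closedBall (0 : Fin n → ℝ) r).of_isClosed_subset (isClosed_ball' hp.le r)
    (ball'_subset_closedBall hp hr)

lemma ball'_subset_ball' {n : ℕ} {p : ℝ} (hp : 0 < p) {r₁ r₂ : ℝ} (h1 : 0 ≤ r₁)
    (h12 : r₁ ≤ r₂) : ball' n p r₁ ⊆ ball' n p r₂ :=
  fun _ hx => hx.trans (Real.rpow_le_rpow h1 h12 hp.le)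

lemma volume_ball'_pos {n : ℕ} {p : ℝ} (hn : 1 ≤ n) (hp : 1 ≤ p) {r : ℝ} (hr : 0 < r) :
    0 < volume (ball' n p r) := by
  have hp0 : 0 < p := lt_of_lt_of_le one_pos hp
  have hn0 : (0:ℝ) < n := by exact_mod_cast hn
  set ε : ℝ := r * (n : ℝ) ^ (-(1/p)) with hε
  have hε0 : 0 < ε := mul_pos hr (Real.rpow_pos_of_pos hn0 _)
  have hsub : Metric.ball (0 : Fin n → ℝ) ε ⊆ ball' n p r := by
    intro x hx
    rw [Metric.mem_ball, dist_zero_right] at hx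
    have hb : ∀ i, |x i| ^ p ≤ ε ^ p := fun i =>
      Real.rpow_le_rpow (abs_nonneg _)
        (le_of_lt (lt_of_le_of_lt (by rw [← Real.norm_eq_abs]; exact norm_le_pi_norm x i) hx))
        hp0.le
    have hεp : ε ^ p = r ^ p * ((n:ℝ))⁻¹ := by
      rw [hε, Real.mul_rpow hr.le (Real.rpow_nonneg hn0.le _),
        ← Real.rpow_mul hn0.le]
      congr 1
      rw [neg_mul, one_div, inv_mul_cancel₀ hp0.ne', Real.rpow_neg_one]
    calc ∑ i, |x i| ^ p ≤ ∑ _i : Fin n, ε ^ p := Finset.sum_le_sum fun i _ => hb i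
      _ = (n : ℝ) * ε ^ p := by rw [Finset.sum_const, Finset.card_univ, Fintype.card_fin,
        nsmul_eq_mul]
      _ = r ^ p := by rw [hεp]; field_simp
  exact lt_of_lt_of_le (Metric.measure_ball_pos volume 0 hε0) (measure_mono hsub)

lemma setIntegral_ball'_smul {n : ℕ} {p : ℝ} (hp : 1 ≤ p) {g : (Fin n → ℝ) → ℝ} {δ : ℕ}
    (hg : ∀ c : ℝ, 0 ≤ c → ∀ x, g (c • x) = c ^ δ * g x) {r c : ℝ} (hr : 0 ≤ r)
    (hc : 0 < c) :
    ∫ x in ball' n p (c * r), g x = c ^ (n + δ) * ∫ x in ball' n p r, g x := by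
  have hp0 : 0 < p := lt_of_lt_of_le one_pos hp
  have key : ∀ x : Fin n → ℝ, Set.indicator (ball' n p r) g (c⁻¹ • x)
      = c⁻¹ ^ δ * Set.indicator (ball' n p (c * r)) g x := by
    intro x
    have hmem : c⁻¹ • x ∈ ball' n p r ↔ x ∈ ball' n p (c * r) := by
      show (∑ i, |(c⁻¹ • x) i| ^ p ≤ r ^ p) ↔ (∑ i, |x i| ^ p ≤ (c * r) ^ p)
      rw [sum_abs_rpow_smul (inv_nonneg.mpr hc.le),
        Real.inv_rpow hc.le, Real.mul_rpow hc.le hr,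
        inv_mul_le_iff₀ (Real.rpow_pos_of_pos hc p)]
    by_cases hx : x ∈ ball' n p (c * r)
    · rw [Set.indicator_of_mem (hmem.mpr hx), Set.indicator_of_mem hx,
        hg c⁻¹ (inv_nonneg.mpr hc.le)]
    · rw [Set.indicator_of_notMem (fun h => hx (hmem.mp h)),
        Set.indicator_of_notMem hx, mul_zero]
  have h := MeasureTheory.Measure.integral_comp_inv_smul (volume : Measure (Fin n → ℝ))
    (Set.indicator (ball' n p r) g) c
  rw [Module.finrank_fintype_fun_eq_card, Fintype.card_fin,
    abs_of_nonneg (pow_nonneg hc.le n)] at h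
  simp only [key] at h
  rw [integral_const_mul, integral_indicator (measurableSet_ball' hp0.le r),
    integral_indicator (measurableSet_ball' hp0.le (c * r)), smul_eq_mul] at h
  have hcδ : c ^ δ * c⁻¹ ^ δ = 1 := by
    rw [← mul_pow, mul_inv_cancel₀ hc.ne', one_pow]
  calc ∫ x in ball' n p (c * r), g x
      = c ^ δ * (c⁻¹ ^ δ * ∫ x in ball' n p (c * r), g x) := by
        rw [← mul_assoc, hcδ, one_mul]
    _ = c ^ δ * (c ^ n * ∫ x in ball' n p r, g x) := by rw [h]
    _ = c ^ (n + δ) * ∫ x in ball' n p r, g x := by rw [pow_add]; ring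

lemma oneDim (d : ℕ) (hd : 1 ≤ d) {t : ℝ} (ht0 : 0 ≤ t) (ht1 : t ≤ 1) :
    ∫ c in Ioc (0:ℝ) 1, Set.indicator (Ici t) (fun c => (d:ℝ) * c ^ (d-1)) c
      = 1 - t ^ d := by
  have hd0 : (d:ℝ) ≠ 0 := Nat.cast_ne_zero.mpr (by omega)
  rw [setIntegral_indicator measurableSet_Ici]
  have hIoc : ∀ a : ℝ, 0 ≤ a → a ≤ 1 →
      ∫ c in Ioc a 1, (d:ℝ) * c ^ (d-1) = 1 - a ^ d := by
    intro a ha0 ha1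
    rw [← intervalIntegral.integral_of_le ha1, intervalIntegral.integral_const_mul,
      integral_pow, Nat.sub_add_cancel hd, one_pow]
    field_simp
    rw [Nat.cast_sub hd, Nat.cast_one]
    ring
  rcases eq_or_lt_of_le ht0 with h0 | h0
  · have : Ioc (0:ℝ) 1 ∩ Ici t = Ioc 0 1 := by
      rw [← h0]
      ext c
      simp only [mem_inter_iff, mem_Ioc, mem_Ici, and_iff_left_iff_imp]
      exact fun hc => hc.1.le
    rw [this, hIoc 0 le_rfl zero_le_one, ← h0, zero_pow (by omega)]
  · have : Ioc (0:ℝ) 1 ∩ Ici t = Icc t 1 := by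
      ext c
      simp only [mem_inter_iff, mem_Ioc, mem_Ici, mem_Icc]
      constructor
      · rintro ⟨⟨_, hc1⟩, htc⟩; exact ⟨htc, hc1⟩
      · rintro ⟨htc, hc1⟩; exact ⟨⟨lt_of_lt_of_le h0 htc, hc1⟩, htc⟩
    rw [this, integral_Icc_eq_integral_Ioc, hIoc t ht0 ht1]


lemma eval_smul_of_isHomogeneous {n d : ℕ} {f : MvPolynomial (Fin n) ℝ}
    (hf : f.IsHomogeneous d) (c : ℝ) (x : Fin n → ℝ) :
    MvPolynomial.eval (c • x) f = c ^ d * MvPolynomial.eval x f := by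
  rw [MvPolynomial.eval_eq', MvPolynomial.eval_eq', Finset.mul_sum]
  refine Finset.sum_congr rfl fun I hI => ?_
  have hw : Finsupp.weight 1 I = d := hf (MvPolynomial.mem_support_iff.mp hI)
  have hsum : ∑ i, I i = d := by
    rw [← hw]
    change _ = Finsupp.weight (fun _ => (1:ℕ)) I
    rw [← Finsupp.degree_eq_weight_one]
    unfold Finsupp.degree
    exact (Finset.sum_subset (Finset.subset_univ _)
      (fun i _ h => Finsupp.notMem_support_iff.mp h)).symm
  have hprod : ∏ i, (c • x) i ^ I i = c ^ d * ∏ i, x i ^ I i := by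
    simp only [Pi.smul_apply, smul_eq_mul, mul_pow]
    rw [Finset.prod_mul_distrib, Finset.prod_pow_eq_pow_sum, hsum]
  rw [hprod]; ring

lemma core (d : ℕ) (hd : 1 ≤ d) {p : ℝ} (hp : 1 ≤ p) {n : ℕ} (hn : 1 ≤ n)
    {g : (Fin n → ℝ) → ℝ} (hgc : Continuous g) (δ : ℕ)
    (hg : ∀ c : ℝ, 0 ≤ c → ∀ x, g (c • x) = c ^ δ * g x) :
    ∫ x in ball' n p (Rnp n p), g x * (∑ i, |x i| ^ p) ^ ((d : ℝ) / p)
      = Rnp n p ^ d * (((n:ℝ) + δ) / ((n:ℝ) + δ + d)) *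
          ∫ x in ball' n p (Rnp n p), g x := by
  have hp0 : 0 < p := lt_of_lt_of_le one_pos hp
  set R : ℝ := Rnp n p with hRdef
  have hR : 0 < R := Rnp_pos hn hp
  set B : Set (Fin n → ℝ) := ball' n p R with hBdef
  have hBm : MeasurableSet B := measurableSet_ball' hp0.le R
  have hBc : IsCompact B := isCompact_ball' hp0 hR.le
  set F : ℝ → (Fin n → ℝ) → ℝ :=
    fun c x => (d:ℝ) * c ^ (d-1) * Set.indicator (ball' n p (c * R)) g x with hFdef
  -- Fubini integrability
  have hU : MeasurableSet {q : ℝ × (Fin n → ℝ) | ∑ i, |q.2 i| ^ p ≤ (q.1 * R) ^ p} := by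
    apply (isClosed_le ((continuous_sum_abs_rpow hp0.le).comp continuous_snd)
      ((Real.continuous_rpow_const hp0.le).comp
        (continuous_fst.mul continuous_const))).measurableSet
  have heq : Function.uncurry F = fun q : ℝ × (Fin n → ℝ) =>
      (d:ℝ) * q.1 ^ (d-1) *
        Set.indicator {q' : ℝ × (Fin n → ℝ) | ∑ i, |q'.2 i| ^ p ≤ (q'.1 * R) ^ p}
          (fun q' => g q'.2) q := by
    funext q
    show (d:ℝ) * q.1 ^ (d-1) * Set.indicator (ball' n p (q.1 * R)) g q.2 = _
    congr 1
  have hFmeas : AEStronglyMeasurable (Function.uncurry F)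
      ((volume.restrict (Ioc (0:ℝ) 1)).prod (volume.restrict B)) := by
    rw [heq]
    exact ((measurable_const.mul (measurable_fst.pow_const _)).mul
      ((hgc.measurable.comp measurable_snd).indicator hU)).aestronglyMeasurable
  obtain ⟨M, hM⟩ := hBc.exists_bound_of_continuousOn hgc.continuousOn
  haveI : IsFiniteMeasure ((volume : Measure ℝ).restrict (Ioc (0:ℝ) 1)) :=
    ⟨by rw [Measure.restrict_apply_univ]; exact measure_Ioc_lt_top⟩
  haveI : IsFiniteMeasure ((volume : Measure (Fin n → ℝ)).restrict B) :=
    ⟨by rw [Measure.restrict_apply_univ]; exact hBc.measure_lt_top⟩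
  have hFub : Integrable (Function.uncurry F)
      ((volume.restrict (Ioc (0:ℝ) 1)).prod (volume.restrict B)) := by
    refine Integrable.mono' (g := fun _ => (d:ℝ) * max M 0) (integrable_const _) hFmeas ?_
    rw [Measure.prod_restrict]
    filter_upwards [ae_restrict_mem (measurableSet_Ioc.prod hBm)] with q hq
    obtain ⟨hq1, hq2⟩ := hq
    have hind : ‖Set.indicator (ball' n p (q.1 * R)) g q.2‖ ≤ max M 0 := by
      by_cases h : q.2 ∈ ball' n p (q.1 * R)
      · rw [Set.indicator_of_mem h]
        refine le_max_of_le_left (hM _ (ball'_subset_ball' hp0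
          (mul_nonneg hq1.1.le hR.le) ?_ h))
        nlinarith [hq1.2, hR.le, hq1.1.le]
      · rw [Set.indicator_of_notMem h, norm_zero]
        exact le_max_right _ _
    have hpow : ‖q.1 ^ (d-1)‖ ≤ 1 := by
      rw [Real.norm_eq_abs, abs_of_nonneg (pow_nonneg hq1.1.le _)]
      exact pow_le_one₀ hq1.1.le hq1.2
    show ‖(d:ℝ) * q.1 ^ (d-1) * Set.indicator (ball' n p (q.1 * R)) g q.2‖ ≤ _
    rw [norm_mul, norm_mul, Real.norm_natCast]
    calc (d:ℝ) * ‖q.1 ^ (d-1)‖ * ‖Set.indicator (ball' n p (q.1 * R)) g q.2‖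
        ≤ (d:ℝ) * 1 * max M 0 := by
          have h0d : (0:ℝ) ≤ d := Nat.cast_nonneg d
          have := mul_le_mul hpow hind (norm_nonneg _) zero_le_one
          nlinarith [norm_nonneg (q.1 ^ (d-1)), this]
      _ = (d:ℝ) * max M 0 := by ring
  have hIg : IntegrableOn g B volume := hgc.continuousOn.integrableOn_compact hBc
  have hIh : IntegrableOn (fun x => ∫ c in Ioc (0:ℝ) 1, F c x) B volume :=
    hFub.integral_prod_right
  set I : ℝ := ∫ x in B, g x with hIdef
  -- pointwise identity on B
  have step1 : ∀ x ∈ B, g x * (∑ i, |x i| ^ p) ^ ((d:ℝ)/p)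
      = R ^ d * (g x - ∫ c in Ioc (0:ℝ) 1, F c x) := by
    intro x hx
    set Sx : ℝ := ∑ i, |x i| ^ p with hSdef
    have hSx : 0 ≤ Sx := sum_abs_rpow_nonneg p x
    set ρ : ℝ := Sx ^ (1/p) with hρdef
    have hρ0 : 0 ≤ ρ := Real.rpow_nonneg hSx _
    have hρp : ρ ^ p = Sx := by
      rw [hρdef, ← Real.rpow_mul hSx, one_div, inv_mul_cancel₀ hp0.ne', Real.rpow_one]
    have hρR : ρ ≤ R := by
      have h1 : ρ ^ p ≤ R ^ p := by rw [hρp]; exact hx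
      exact (Real.rpow_le_rpow_iff hρ0 hR.le hp0).mp h1
    have hmem : ∀ c : ℝ, 0 < c → (x ∈ ball' n p (c * R) ↔ ρ / R ≤ c) := by
      intro c hc
      have h1 : x ∈ ball' n p (c * R) ↔ Sx ≤ (c * R) ^ p := Iff.rfl
      rw [h1, ← hρp, Real.rpow_le_rpow_iff hρ0 (mul_nonneg hc.le hR.le) hp0,
        div_le_iff₀ hR]
    have hinner : ∫ c in Ioc (0:ℝ) 1, F c x = g x * (1 - (ρ/R)^d) := by
      have hcongr : EqOn (fun c => F c x)
          (fun c => Set.indicator (Ici (ρ/R)) (fun c => (d:ℝ) * c ^ (d-1)) c * g x)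
          (Ioc (0:ℝ) 1) := by
        intro c hc
        by_cases h : ρ/R ≤ c
        · show F c x = Set.indicator (Ici (ρ/R)) (fun c => (d:ℝ) * c ^ (d-1)) c * g x
          rw [Set.indicator_of_mem (show c ∈ Ici (ρ/R) from h)]
          show (d:ℝ) * c ^ (d-1) * Set.indicator (ball' n p (c * R)) g x = _
          rw [Set.indicator_of_mem ((hmem c hc.1).mpr h)]
        · show F c x = Set.indicator (Ici (ρ/R)) (fun c => (d:ℝ) * c ^ (d-1)) c * g x
          rw [Set.indicator_of_notMem (show c ∉ Ici (ρ/R) from h)]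
          show (d:ℝ) * c ^ (d-1) * Set.indicator (ball' n p (c * R)) g x = 0 * g x
          rw [Set.indicator_of_notMem (fun hm => h ((hmem c hc.1).mp hm))]
          ring
      rw [setIntegral_congr_fun measurableSet_Ioc hcongr, integral_mul_const,
        oneDim d hd (div_nonneg hρ0 hR.le) ((div_le_one hR).mpr hρR)]
      ring
    have hSd : Sx ^ ((d:ℝ)/p) = ρ ^ d := by
      have h1 : (d:ℝ)/p = (1/p) * (d:ℝ) := by ring
      rw [h1, Real.rpow_mul hSx, ← hρdef, Real.rpow_natCast]
    rw [hSd, hinner]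
    rw [div_pow]
    have hRd : R ^ d ≠ 0 := pow_ne_zero _ hR.ne'
    have hfin : R ^ d * (g x - g x * (1 - ρ ^ d / R ^ d)) = g x * ρ ^ d * (R ^ d / R ^ d) := by
      ring
    rw [hfin, div_self hRd, mul_one]
  -- swap
  have hswap : ∫ x in B, (∫ c in Ioc (0:ℝ) 1, F c x)
      = ∫ c in Ioc (0:ℝ) 1, (∫ x in B, F c x) :=
    (integral_integral_swap hFub).symm
  have hinner2 : EqOn (fun c => ∫ x in B, F c x)
      (fun c => (d:ℝ) * c ^ (n + δ + d - 1) * I) (Ioc (0:ℝ) 1) := by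
    intro c hc
    show ∫ x in B, F c x = (d:ℝ) * c ^ (n + δ + d - 1) * I
    have h1 : ∫ x in B, F c x
        = (d:ℝ) * c ^ (d-1) * ∫ x in B, Set.indicator (ball' n p (c * R)) g x :=
      integral_const_mul _ _
    rw [h1, setIntegral_indicator (measurableSet_ball' hp0.le _)]
    have hss : B ∩ ball' n p (c * R) = ball' n p (c * R) :=
      inter_eq_self_of_subset_right (ball'_subset_ball' hp0
        (mul_nonneg hc.1.le hR.le) (by nlinarith [hc.2, hR.le, hc.1.le]))
    rw [hss, setIntegral_ball'_smul hp hg hR.le hc.1, ← hIdef]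
    have hpowc : c ^ (d-1) * c ^ (n + δ) = c ^ (n + δ + d - 1) := by
      rw [← pow_add]
      congr 1
      omega
    calc (d:ℝ) * c ^ (d-1) * (c ^ (n+δ) * I)
        = (d:ℝ) * (c ^ (d-1) * c ^ (n+δ)) * I := by ring
      _ = (d:ℝ) * c ^ (n + δ + d - 1) * I := by rw [hpowc]
  have hcint : ∫ c in Ioc (0:ℝ) 1, ((d:ℝ) * c ^ (n + δ + d - 1) * I)
      = (d:ℝ) / ((n:ℝ) + δ + d) * I := by
    rw [← intervalIntegral.integral_of_le zero_le_one,
      intervalIntegral.integral_mul_const, intervalIntegral.integral_const_mul,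
      integral_pow, one_pow, zero_pow (by omega : n + δ + d - 1 + 1 ≠ 0)]
    have h1 : ((n + δ + d - 1 : ℕ) : ℝ) = (n:ℝ) + δ + d - 1 := by
      rw [Nat.cast_sub (by omega : 1 ≤ n + δ + d)]
      push_cast
      ring
    rw [h1]
    rw [show (n:ℝ) + ↑δ + ↑d - 1 + 1 = (n:ℝ) + ↑δ + ↑d from by ring]
    have hden' : ((n:ℝ) + δ + d) ≠ 0 := by
      have hx1 : (1:ℝ) ≤ n := by exact_mod_cast hn
      have hx2 : (0:ℝ) ≤ δ := Nat.cast_nonneg δ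
      have hx3 : (0:ℝ) ≤ d := Nat.cast_nonneg d
      intro h; linarith [h]
    field_simp
    ring
  have hden : (0:ℝ) < (n:ℝ) + δ + d := by
    have h1 : (1:ℝ) ≤ n := by exact_mod_cast hn
    have h2 : (0:ℝ) ≤ δ := Nat.cast_nonneg δ
    have h3 : (0:ℝ) ≤ d := Nat.cast_nonneg d
    linarith
  calc ∫ x in B, g x * (∑ i, |x i| ^ p) ^ ((d:ℝ)/p)
      = ∫ x in B, R ^ d * (g x - ∫ c in Ioc (0:ℝ) 1, F c x) :=
        setIntegral_congr_fun hBm step1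
    _ = R ^ d * ((∫ x in B, g x) - ∫ x in B, (∫ c in Ioc (0:ℝ) 1, F c x)) := by
        rw [integral_const_mul, integral_sub hIg hIh]
    _ = R ^ d * (I - (d:ℝ) / ((n:ℝ) + δ + d) * I) := by
        rw [hswap, setIntegral_congr_fun measurableSet_Ioc hinner2, hcint, ← hIdef]
    _ = R ^ d * (((n:ℝ) + δ) / ((n:ℝ) + δ + d)) * I := by
        field_simp
        ring

/-- Lemma 2.8: the covariance of a degree-`d` homogeneous polynomial with `‖x‖_p^d` under
`μ_{n,p}` equals `R_{n,p}^d · d²/((n+2d)(n+d)) · E f`.  Here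
`‖x‖_p^d = (Σ |x_i|^p)^{d/p}` and `Cov(f,g) = ∫ fg - (∫f)(∫g)`. -/
theorem covariance_with_p_norm (d : ℕ) (hd : 1 ≤ d) (p : ℝ) (hp : 1 ≤ p) (n : ℕ) (hn : 1 ≤ n)
    (f : MvPolynomial (Fin n) ℝ) (hf : f.IsHomogeneous d) :
    (∫ x, MvPolynomial.eval x f * (∑ i, |x i| ^ p) ^ ((d : ℝ) / p) ∂(muNP n p))
      - (∫ x, MvPolynomial.eval x f ∂(muNP n p)) *
          (∫ x, (∑ i, |x i| ^ p) ^ ((d : ℝ) / p) ∂(muNP n p))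
      = Rnp n p ^ d * ((d : ℝ) ^ 2 / ((((n : ℝ) + 2 * d)) * ((n : ℝ) + d))) *
          ∫ x, MvPolynomial.eval x f ∂(muNP n p) := by
  have hp0 : 0 < p := lt_of_lt_of_le one_pos hp
  have hR : 0 < Rnp n p := Rnp_pos hn hp
  have hBeq : lpBall n p = ball' n p (Rnp n p) := rfl
  have hμpos : 0 < volume (lpBall n p) := by
    rw [hBeq]; exact volume_ball'_pos hn hp hR
  have hμfin : volume (lpBall n p) < ⊤ := by
    rw [hBeq]
    exact (isCompact_ball' hp0 hR.le).measure_lt_top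
  set v : ℝ := (volume (lpBall n p)).toReal with hv
  have hv0 : 0 < v := ENNReal.toReal_pos hμpos.ne' hμfin.ne
  have hμint : ∀ h : (Fin n → ℝ) → ℝ,
      ∫ x, h x ∂(muNP n p) = v⁻¹ * ∫ x in lpBall n p, h x := by
    intro h
    rw [muNP, integral_smul_measure, ENNReal.toReal_inv, smul_eq_mul, hv]
  have hfc : Continuous fun x : Fin n → ℝ => MvPolynomial.eval x f :=
    f.continuous_eval
  have hfh : ∀ c : ℝ, 0 ≤ c → ∀ x : Fin n → ℝ,
      MvPolynomial.eval (c • x) f = c ^ d * MvPolynomial.eval x f :=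
    fun c _ x => eval_smul_of_isHomogeneous hf c x
  have h1 := core d hd hp hn hfc d hfh
  have h0 := core d hd hp hn (g := fun _ => (1:ℝ)) continuous_const 0
    (fun c hc x => by simp)
  simp only [one_mul] at h0
  have hvol1 : ∫ _x in ball' n p (Rnp n p), (1:ℝ) = v := by
    rw [setIntegral_const, smul_eq_mul, mul_one, measureReal_def, hv, hBeq]
  rw [hvol1] at h0
  rw [hμint (fun x => MvPolynomial.eval x f * (∑ i, |x i| ^ p) ^ ((d : ℝ) / p)),
    hμint (fun x => MvPolynomial.eval x f),
    hμint (fun x => (∑ i, |x i| ^ p) ^ ((d : ℝ) / p))]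
  rw [hBeq, h1, h0]
  have hnR : (1:ℝ) ≤ n := by exact_mod_cast hn
  have hdR : (1:ℝ) ≤ d := by exact_mod_cast hd
  have e1 : ((n:ℝ) + d + d) ≠ 0 := by linarith
  have e2 : ((n:ℝ) + 0 + d) ≠ 0 := by linarith
  have e3 : ((n:ℝ) + 2 * d) ≠ 0 := by linarith
  have e4 : ((n:ℝ) + d) ≠ 0 := by linarith
  field_simp
  ring
end
end

section
/- For n ∈ ℕ, let μ_n := μ_{n,2} ⊗ μ_{n,2} be the product on ℝ^{2n} of two copies of the uniform measure on the n-dimensional isotropic Euclidean ball, and define f_n : ℝ^{2n} → ℝ by f_n(x) = (1/√(2n)) (x₁² + ⋯ + x_n² − x_{n+1}² − ⋯ − x_{2n}²). Then for every n ∈ ℕ: Var_{μ_n}(f_n) ≤ 4/n, and μ_n({x : |f_n(x)| < 4/√n}) ≥ 3/4. Consequently, there are no constants C > 0 and α > 0 (independent of n) such that μ_n({x : |f_n(x)| < ε}) ≤ C ε^α for all n and all ε > 0. -/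
open MeasureTheory

noncomputable section

/-- The product of two copies of the uniform measure on the isotropic Euclidean ball. -/
def muProd (n : ℕ) : Measure ((Fin n → ℝ) × (Fin n → ℝ)) :=
  (muNP n 2).prod (muNP n 2)

/-- The polynomial `f_n(x) = (2n)^{-1/2}(x₁² + ⋯ + x_n² - x_{n+1}² - ⋯ - x_{2n}²)`, viewed
as a function on the product space. -/
def fBad (n : ℕ) (z : (Fin n → ℝ) × (Fin n → ℝ)) : ℝ :=
  (Real.sqrt (2 * n))⁻¹ * ((∑ i, z.1 i ^ 2) - ∑ i, z.2 i ^ 2)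

open Set Metric Filter

section aux
variable {n : ℕ}

lemma Rnp_two {n : ℕ} (hn : 1 ≤ n) : Rnp n 2 = Real.sqrt (n + 2) := by
  have hn0 : (0:ℝ) < n := by exact_mod_cast hn
  unfold Rnp
  congr 1
  have h1 : ((n:ℝ) + 2) / 2 = n / 2 + 1 := by ring
  have h2 : Real.Gamma ((n:ℝ)/2 + 1) = ((n:ℝ)/2) * Real.Gamma ((n:ℝ)/2) :=
    Real.Gamma_add_one (by positivity)
  have h3 : Real.Gamma ((n:ℝ)/2) ≠ 0 := (Real.Gamma_pos_of_pos (by positivity)).ne'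
  have h4 : (3:ℝ)/2 = 1/2 + 1 := by norm_num
  have h5 : Real.Gamma ((1:ℝ)/2 + 1) = (1/2) * Real.Gamma (1/2) :=
    Real.Gamma_add_one (by norm_num)
  have h6 : Real.Gamma ((1:ℝ)/2) ≠ 0 := (Real.Gamma_pos_of_pos (by norm_num)).ne'
  rw [h1, h2, h4, h5]
  field_simp

lemma lpBall_two {n : ℕ} (hn : 1 ≤ n) :
    lpBall n 2 = {x : Fin n → ℝ | ∑ i, x i ^ 2 ≤ (n:ℝ) + 2} := by
  have hR : Rnp n 2 ^ (2:ℝ) = (n:ℝ) + 2 := by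
    rw [Rnp_two hn]
    rw [show ((2:ℝ) = ((2:ℕ):ℝ)) by norm_num, Real.rpow_natCast]
    exact Real.sq_sqrt (by positivity)
  unfold lpBall
  ext x
  simp only [mem_setOf_eq, hR]
  congr! 1
  refine Finset.sum_congr rfl fun i _ => ?_
  rw [show ((2:ℝ) = ((2:ℕ):ℝ)) by norm_num, Real.rpow_natCast, sq_abs]


abbrev Euc (n : ℕ) := EuclideanSpace ℝ (Fin n)

lemma euc_nontrivial (hn : 1 ≤ n) : Nontrivial (Euc n) := by
  haveI : Nonempty (Fin n) := ⟨⟨0, hn⟩⟩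
  infer_instance

lemma moment_euclidean (hn : 1 ≤ n) (k : ℕ) {R : ℝ} (hR : 0 < R) :
    ∫ x : Euc n, (closedBall (0 : Euc n) R).indicator (fun x => ‖x‖ ^ (2 * k)) x
      = n * (volume (ball (0 : Euc n) 1)).toReal * (R ^ (n + 2 * k) / (n + 2 * k)) := by
  haveI := euc_nontrivial hn
  have hdim : Module.finrank ℝ (Euc n) = n := finrank_euclideanSpace_fin
  have key : ∀ x : Euc n,
      (closedBall (0 : Euc n) R).indicator (fun x => ‖x‖ ^ (2 * k)) x
        = (Icc (0:ℝ) R).indicator (fun r => r ^ (2 * k)) ‖x‖ := by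
    intro x
    by_cases h : x ∈ closedBall (0 : Euc n) R
    · rw [indicator_of_mem h, indicator_of_mem]
      exact ⟨norm_nonneg x, by simpa [mem_closedBall, dist_zero_right] using h⟩
    · rw [indicator_of_notMem h, indicator_of_notMem]
      intro hc
      exact h (by simpa [mem_closedBall, dist_zero_right] using hc.2)
  simp_rw [key]
  rw [integral_fun_norm_addHaar volume (fun r : ℝ => (Icc (0:ℝ) R).indicator (fun r => r ^ (2*k)) r)]
  rw [hdim]
  have h1 : ∀ y : ℝ, y ^ (n - 1) • (Icc (0:ℝ) R).indicator (fun r => r ^ (2*k)) y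
      = (Icc (0:ℝ) R).indicator (fun r => r ^ (n - 1 + 2*k)) y := by
    intro y
    simp only [smul_eq_mul, ← Set.indicator_const_mul]
    by_cases h : y ∈ Icc (0:ℝ) R
    · simp [indicator_of_mem h, pow_add]
    · simp [indicator_of_notMem h]
  simp_rw [h1]
  rw [integral_indicator measurableSet_Icc, Measure.restrict_restrict measurableSet_Icc]
  have h2 : Icc (0:ℝ) R ∩ Ioi 0 = Ioc 0 R := by
    ext y
    simp only [mem_inter_iff, mem_Icc, mem_Ioi, mem_Ioc]
    constructor
    · rintro ⟨⟨_, h2⟩, h3⟩; exact ⟨h3, h2⟩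
    · rintro ⟨h1, h2⟩; exact ⟨⟨h1.le, h2⟩, h1⟩
  rw [h2]
  have h3 : ∫ y in Ioc (0:ℝ) R, y ^ (n - 1 + 2*k)
      = ∫ y in (0:ℝ)..R, y ^ (n - 1 + 2*k) := by
    rw [intervalIntegral.integral_of_le hR.le]
  rw [h3, integral_pow]
  have hn1 : n - 1 + 2*k + 1 = n + 2*k := by omega
  rw [hn1]
  simp only [zero_pow (by omega : n + 2*k ≠ 0), sub_zero, nsmul_eq_mul, smul_eq_mul]
  push_cast [hn1, Nat.cast_sub hn]
  simp only [measureReal_def]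
  ring


lemma integral_pi_eq_euc (g : (Fin n → ℝ) → ℝ) :
    ∫ x, g x ∂(volume : Measure (Fin n → ℝ)) = ∫ x : Euc n, g x := by
  rw [← (EuclideanSpace.volume_preserving_symm_measurableEquiv_toLp (Fin n)).integral_comp
    (MeasurableEquiv.toLp 2 (Fin n → ℝ)).symm.measurableEmbedding g]
  rfl

lemma volume_pi_eq_euc (s : Set (Fin n → ℝ)) (hs : MeasurableSet s) :
    (volume : Measure (Fin n → ℝ)) s = (volume : Measure (Euc n)) (WithLp.ofLp ⁻¹' s) := by
  rw [← (EuclideanSpace.volume_preserving_symm_measurableEquiv_toLp (Fin n)).measure_preimage hs.nullMeasurableSet]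
  rfl


lemma norm_sq_euc (x : Euc n) : ‖x‖ ^ 2 = ∑ i, x i ^ 2 := by
  rw [EuclideanSpace.norm_eq, Real.sq_sqrt (by positivity)]
  simp [Real.norm_eq_abs, sq_abs]

lemma mem_cb_iff {R : ℝ} (hR : 0 ≤ R) (x : Euc n) :
    x ∈ closedBall (0 : Euc n) R ↔ ∑ i, x i ^ 2 ≤ R ^ 2 := by
  rw [mem_closedBall, dist_zero_right, ← norm_sq_euc]
  exact (pow_le_pow_iff_left₀ (norm_nonneg x) hR (by norm_num)).symm

lemma measurableSet_lpBall (hn : 1 ≤ n) : MeasurableSet (lpBall n 2) := by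
  rw [lpBall_two hn]
  exact measurableSet_le (by fun_prop) measurable_const

lemma lpBall_eq_cb (hn : 1 ≤ n) :
    WithLp.ofLp ⁻¹' lpBall n 2 = closedBall (0 : Euc n) (Real.sqrt ((n:ℝ)+2)) := by
  rw [lpBall_two hn]
  ext x
  rw [mem_preimage, mem_setOf_eq, mem_cb_iff (Real.sqrt_nonneg _), Real.sq_sqrt (by positivity)]

lemma vol_cb_pos (hn : 1 ≤ n) {R : ℝ} (hR : 0 < R) :
    0 < volume (closedBall (0 : Euc n) R) :=
  measure_closedBall_pos volume 0 hR

lemma vol_ball_pos' (hn : 1 ≤ n) : 0 < (volume (ball (0 : Euc n) 1)).toReal :=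
  ENNReal.toReal_pos (measure_ball_pos volume 0 one_pos).ne' measure_ball_lt_top.ne

lemma vol_cb_toReal (hn : 1 ≤ n) {R : ℝ} (hR : 0 < R) :
    (volume (closedBall (0 : Euc n) R)).toReal
      = (volume (ball (0 : Euc n) 1)).toReal * R ^ n := by
  have h := moment_euclidean hn 0 hR
  have hn0 : (0:ℝ) < n := by exact_mod_cast hn
  simp only [mul_zero, pow_zero, add_zero, Nat.cast_zero] at h
  rw [integral_indicator_const (1:ℝ) measurableSet_closedBall] at h
  rw [smul_eq_mul, mul_one] at h
  rw [← measureReal_def, h]; field_simp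

lemma moment_muNP (hn : 1 ≤ n) (k : ℕ) :
    ∫ x, (∑ i, x i ^ 2) ^ k ∂(muNP n 2) = ((n:ℝ)+2) ^ k * n / (n + 2*k) := by
  have hn0 : (0:ℝ) < n := by exact_mod_cast hn
  set R : ℝ := Real.sqrt ((n:ℝ)+2) with hRdef
  have hR : 0 < R := Real.sqrt_pos.mpr (by positivity)
  have hR2 : R ^ 2 = (n:ℝ) + 2 := Real.sq_sqrt (by positivity)
  set v : ℝ := (volume (ball (0 : Euc n) 1)).toReal with hvdef
  have hv : 0 < v := vol_ball_pos' hn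
  -- volume of lpBall
  have hvolE : (volume : Measure (Fin n → ℝ)) (lpBall n 2)
      = volume (closedBall (0 : Euc n) R) := by
    rw [volume_pi_eq_euc _ (measurableSet_lpBall hn), lpBall_eq_cb hn]
  have hvol0 : (volume : Measure (Fin n → ℝ)) (lpBall n 2) ≠ 0 := by
    rw [hvolE]; exact (vol_cb_pos hn hR).ne'
  have hvoltop : (volume : Measure (Fin n → ℝ)) (lpBall n 2) ≠ ⊤ := by
    rw [hvolE]; exact measure_closedBall_lt_top.ne
  have hvolR : ((volume : Measure (Fin n → ℝ)) (lpBall n 2)).toReal = v * R ^ n := by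
    rw [hvolE, vol_cb_toReal hn hR]
  -- the restricted integral
  have hres : ∫ x in lpBall n 2, (∑ i, x i ^ 2) ^ k ∂(volume : Measure (Fin n → ℝ))
      = n * v * (R ^ (n + 2*k) / (n + 2*k)) := by
    rw [← integral_indicator (measurableSet_lpBall hn), integral_pi_eq_euc,
      ← moment_euclidean hn k hR]
    congr 1
    funext x
    have hmem : WithLp.ofLp x ∈ lpBall n 2 ↔ x ∈ closedBall (0 : Euc n) R := by
      show x ∈ WithLp.ofLp ⁻¹' lpBall n 2 ↔ _
      rw [lpBall_eq_cb hn]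
    by_cases h : x ∈ closedBall (0 : Euc n) R
    · rw [indicator_of_mem (hmem.mpr h), indicator_of_mem h, ← norm_sq_euc, ← pow_mul]
    · rw [indicator_of_notMem (mt hmem.mp h), indicator_of_notMem h]
  show ∫ x, (∑ i, x i ^ 2) ^ k
      ∂((volume (lpBall n 2))⁻¹ • (volume : Measure (Fin n → ℝ)).restrict (lpBall n 2)) = _
  rw [integral_smul_measure, ENNReal.toReal_inv, hvolR, hres, smul_eq_mul]
  have hRpow : R ^ (n + 2*k) = R ^ n * ((n:ℝ)+2) ^ k := by
    rw [pow_add, pow_mul, hR2]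
  rw [hRpow]
  have h2k : (0:ℝ) < (n:ℝ) + 2*k := by positivity
  field_simp

theorem muNP_prob (hn : 1 ≤ n) : IsProbabilityMeasure (muNP n 2) := by
  constructor
  have h := moment_muNP hn 0
  simp only [pow_zero, Nat.cast_zero, mul_zero, add_zero, one_mul] at h
  rw [integral_const] at h
  have hn0 : (0:ℝ) < n := by exact_mod_cast hn
  rw [div_self hn0.ne'] at h
  simp only [smul_eq_mul, mul_one] at h
  have huniv : (muNP n 2) univ ≠ ⊤ := by
    show ((volume (lpBall n 2))⁻¹ • (volume : Measure (Fin n → ℝ)).restrict (lpBall n 2)) univ ≠ ⊤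
    rw [Measure.smul_apply, Measure.restrict_apply_univ, smul_eq_mul]
    have hvolE : (volume : Measure (Fin n → ℝ)) (lpBall n 2)
        = volume (closedBall (0 : Euc n) (Real.sqrt ((n:ℝ)+2))) := by
      rw [volume_pi_eq_euc _ (measurableSet_lpBall hn), lpBall_eq_cb hn]
    rw [hvolE]
    exact ENNReal.mul_ne_top (ENNReal.inv_ne_top.mpr
      (vol_cb_pos hn (Real.sqrt_pos.mpr (by positivity))).ne') measure_closedBall_lt_top.ne
  exact (ENNReal.toReal_eq_one_iff _).mp h

lemma compact_lpBall (hn : 1 ≤ n) : IsCompact (lpBall n 2) := by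
  have h : IsCompact (closedBall (0 : Euc n) (Real.sqrt ((n:ℝ)+2))) :=
    isCompact_closedBall _ _
  rw [← Set.image_preimage_eq (lpBall n 2) (WithLp.ofLp_surjective 2), lpBall_eq_cb hn]
  exact h.image (by fun_prop)

lemma continuous_Sk (k : ℕ) : Continuous (fun x : Fin n → ℝ => (∑ i, x i ^ 2) ^ k) := by
  fun_prop

lemma integrable_Sk (hn : 1 ≤ n) (k : ℕ) :
    Integrable (fun x : Fin n → ℝ => (∑ i, x i ^ 2) ^ k) (muNP n 2) := by
  have h1 : IntegrableOn (fun x : Fin n → ℝ => (∑ i, x i ^ 2) ^ k) (lpBall n 2) volume :=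
    (continuous_Sk k).continuousOn.integrableOn_compact (compact_lpBall hn)
  show Integrable _ ((volume (lpBall n 2))⁻¹ • volume.restrict (lpBall n 2))
  exact h1.smul_measure (by
    simp only [ne_eq, ENNReal.inv_eq_top]
    intro h
    have hvolE : (volume : Measure (Fin n → ℝ)) (lpBall n 2)
        = volume (closedBall (0 : Euc n) (Real.sqrt ((n:ℝ)+2))) := by
      rw [volume_pi_eq_euc _ (measurableSet_lpBall hn), lpBall_eq_cb hn]
    rw [hvolE] at h
    exact (vol_cb_pos hn (Real.sqrt_pos.mpr (by positivity))).ne' h)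

lemma hE1 (hn : 1 ≤ n) : ∫ x, (∑ i, x i ^ 2) ∂(muNP n 2) = (n:ℝ) := by
  have h := moment_muNP hn 1
  have hn0 : (0:ℝ) < n := by exact_mod_cast hn
  simp only [pow_one, Nat.cast_one, mul_one] at h
  rw [h]
  field_simp

lemma hE2 (hn : 1 ≤ n) :
    ∫ x, (∑ i, x i ^ 2) ^ 2 ∂(muNP n 2) = ((n:ℝ)+2) ^ 2 * n / (n + 4) := by
  have h := moment_muNP hn 2
  norm_num at h
  convert h using 3

section prodcalc

variable (hn : 1 ≤ n)

lemma int_S (hn : 1 ≤ n) : Integrable (fun x : Fin n → ℝ => ∑ i, x i ^ 2) (muNP n 2) := by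
  have := integrable_Sk hn 1
  simpa using this

lemma int_fst (hn : 1 ≤ n) :
    Integrable (fun z : (Fin n → ℝ) × (Fin n → ℝ) => ∑ i, z.1 i ^ 2) (muProd n) := by
  haveI : IsProbabilityMeasure (muNP n 2) := muNP_prob hn
  have := (int_S hn).mul_prod (integrable_const (1:ℝ)) (ν := muNP n 2)
  simpa [muProd] using this

lemma int_snd (hn : 1 ≤ n) :
    Integrable (fun z : (Fin n → ℝ) × (Fin n → ℝ) => ∑ i, z.2 i ^ 2) (muProd n) := by
  haveI : IsProbabilityMeasure (muNP n 2) := muNP_prob hn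
  have := (integrable_const (1:ℝ)).mul_prod (int_S hn) (μ := muNP n 2)
  simpa [muProd] using this

lemma val_fst (hn : 1 ≤ n) :
    ∫ z, (∑ i, z.1 i ^ 2) ∂(muProd n) = (n:ℝ) := by
  haveI : IsProbabilityMeasure (muNP n 2) := muNP_prob hn
  have h : ∫ z, ((∑ i, z.1 i ^ 2) * (1:ℝ)) ∂((muNP n 2).prod (muNP n 2))
      = (∫ x, (∑ i, x i ^ 2) ∂(muNP n 2)) * ∫ _, (1:ℝ) ∂(muNP n 2) :=
    integral_prod_mul (f := fun x : Fin n → ℝ => ∑ i, x i ^ 2) (g := fun _ => (1:ℝ))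
  simpa [muProd, hE1 hn] using h

lemma val_snd (hn : 1 ≤ n) :
    ∫ z, (∑ i, z.2 i ^ 2) ∂(muProd n) = (n:ℝ) := by
  haveI : IsProbabilityMeasure (muNP n 2) := muNP_prob hn
  have h : ∫ z, ((1:ℝ) * (∑ i, z.2 i ^ 2)) ∂((muNP n 2).prod (muNP n 2))
      = (∫ _, (1:ℝ) ∂(muNP n 2)) * ∫ x, (∑ i, x i ^ 2) ∂(muNP n 2) :=
    integral_prod_mul (f := fun _ => (1:ℝ)) (g := fun x : Fin n → ℝ => ∑ i, x i ^ 2)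
  simpa [muProd, hE1 hn] using h

lemma integral_fBad (hn : 1 ≤ n) : ∫ z, fBad n z ∂(muProd n) = 0 := by
  have : ∀ z : (Fin n → ℝ) × (Fin n → ℝ), fBad n z
      = (Real.sqrt (2 * n))⁻¹ * ((∑ i, z.1 i ^ 2) - ∑ i, z.2 i ^ 2) := fun z => rfl
  simp_rw [this]
  rw [integral_const_mul, integral_sub (int_fst hn) (int_snd hn), val_fst hn, val_snd hn]
  simp

end prodcalc

section sqcalc

lemma hc0 (hn : 1 ≤ n) : ((Real.sqrt (2 * (n:ℝ)))⁻¹) ^ 2 = (2 * (n:ℝ))⁻¹ := by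
  rw [inv_pow, Real.sq_sqrt (by positivity)]

lemma fBad_sq_expand (hn : 1 ≤ n) (z : (Fin n → ℝ) × (Fin n → ℝ)) :
    fBad n z ^ 2 = (2 * (n:ℝ))⁻¹ *
      ((∑ i, z.1 i ^ 2) ^ 2 - 2 * ((∑ i, z.1 i ^ 2) * (∑ i, z.2 i ^ 2))
        + (∑ i, z.2 i ^ 2) ^ 2) := by
  have : fBad n z = (Real.sqrt (2 * n))⁻¹ * ((∑ i, z.1 i ^ 2) - ∑ i, z.2 i ^ 2) := rfl
  rw [this, mul_pow, hc0 hn]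
  ring

lemma int_fst2 (hn : 1 ≤ n) :
    Integrable (fun z : (Fin n → ℝ) × (Fin n → ℝ) => (∑ i, z.1 i ^ 2) ^ 2) (muProd n) := by
  haveI : IsProbabilityMeasure (muNP n 2) := muNP_prob hn
  have := (integrable_Sk hn 2).mul_prod (integrable_const (1:ℝ)) (ν := muNP n 2)
  simpa [muProd] using this

lemma int_snd2 (hn : 1 ≤ n) :
    Integrable (fun z : (Fin n → ℝ) × (Fin n → ℝ) => (∑ i, z.2 i ^ 2) ^ 2) (muProd n) := by
  haveI : IsProbabilityMeasure (muNP n 2) := muNP_prob hn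
  have := (integrable_const (1:ℝ)).mul_prod (integrable_Sk hn 2) (μ := muNP n 2)
  simpa [muProd] using this

lemma int_mul (hn : 1 ≤ n) :
    Integrable (fun z : (Fin n → ℝ) × (Fin n → ℝ) =>
      (∑ i, z.1 i ^ 2) * (∑ i, z.2 i ^ 2)) (muProd n) := by
  haveI : IsProbabilityMeasure (muNP n 2) := muNP_prob hn
  exact (int_S hn).mul_prod (int_S hn)

lemma val_fst2 (hn : 1 ≤ n) :
    ∫ z, (∑ i, z.1 i ^ 2) ^ 2 ∂(muProd n) = ((n:ℝ)+2) ^ 2 * n / (n + 4) := by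
  haveI : IsProbabilityMeasure (muNP n 2) := muNP_prob hn
  have h := integral_prod_mul (μ := muNP n 2) (ν := muNP n 2)
    (f := fun x : Fin n → ℝ => (∑ i, x i ^ 2) ^ 2) (g := fun _ => (1:ℝ))
  simpa [muProd, hE2 hn] using h

lemma val_snd2 (hn : 1 ≤ n) :
    ∫ z, (∑ i, z.2 i ^ 2) ^ 2 ∂(muProd n) = ((n:ℝ)+2) ^ 2 * n / (n + 4) := by
  haveI : IsProbabilityMeasure (muNP n 2) := muNP_prob hn
  have h := integral_prod_mul (μ := muNP n 2) (ν := muNP n 2)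
    (f := fun _ => (1:ℝ)) (g := fun x : Fin n → ℝ => (∑ i, x i ^ 2) ^ 2)
  simpa [muProd, hE2 hn] using h

lemma val_mul (hn : 1 ≤ n) :
    ∫ z, (∑ i, z.1 i ^ 2) * (∑ i, z.2 i ^ 2) ∂(muProd n) = (n:ℝ) * n := by
  haveI : IsProbabilityMeasure (muNP n 2) := muNP_prob hn
  have h := integral_prod_mul (μ := muNP n 2) (ν := muNP n 2)
    (f := fun x : Fin n → ℝ => ∑ i, x i ^ 2) (g := fun x : Fin n → ℝ => ∑ i, x i ^ 2)
  simpa [muProd, hE1 hn] using h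

lemma integral_fBad_sq (hn : 1 ≤ n) :
    ∫ z, fBad n z ^ 2 ∂(muProd n) = 4 / ((n:ℝ) + 4) := by
  have hn0 : (0:ℝ) < n := by exact_mod_cast hn
  simp_rw [fBad_sq_expand hn]
  have h12 : Integrable (fun z : (Fin n → ℝ) × (Fin n → ℝ) =>
      (∑ i, z.1 i ^ 2) ^ 2 - 2 * ((∑ i, z.1 i ^ 2) * (∑ i, z.2 i ^ 2))) (muProd n) :=
    (int_fst2 hn).sub ((int_mul hn).const_mul 2)
  have h2m : Integrable (fun z : (Fin n → ℝ) × (Fin n → ℝ) =>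
      2 * ((∑ i, z.1 i ^ 2) * (∑ i, z.2 i ^ 2))) (muProd n) :=
    (int_mul hn).const_mul 2
  rw [integral_const_mul, integral_add h12 (int_snd2 hn),
    integral_sub (int_fst2 hn) h2m, integral_const_mul, val_fst2 hn, val_snd2 hn, val_mul hn]
  field_simp
  ring

lemma integrable_fBad_sq (hn : 1 ≤ n) :
    Integrable (fun z => fBad n z ^ 2) (muProd n) := by
  have h := (((int_fst2 hn).sub ((int_mul hn).const_mul 2)).add (int_snd2 hn)).const_mul
    ((2 * (n:ℝ))⁻¹)
  exact h.congr (Filter.Eventually.of_forall fun z => (fBad_sq_expand hn z).symm)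

end sqcalc

lemma measurable_fBad : Measurable (fBad n) := by
  unfold fBad
  fun_prop

lemma mVar_bound (hn : 1 ≤ n) : mVar (muProd n) (fBad n) ≤ 4 / n := by
  have hn0 : (0:ℝ) < n := by exact_mod_cast hn
  rw [mVar, integral_fBad hn, integral_fBad_sq hn]
  simp only [ne_eq, OfNat.ofNat_ne_zero, not_false_eq_true, zero_pow, sub_zero]
  rw [div_le_div_iff₀ (by linarith) hn0]
  nlinarith

lemma prob_bound (hn : 1 ≤ n) :
    3 / 4 ≤ ((muProd n) {z | |fBad n z| < 4 / Real.sqrt n}).toReal := by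
  have hn0 : (0:ℝ) < n := by exact_mod_cast hn
  haveI : IsProbabilityMeasure (muNP n 2) := muNP_prob hn
  haveI : IsProbabilityMeasure (muProd n) := by unfold muProd; infer_instance
  set A : Set ((Fin n → ℝ) × (Fin n → ℝ)) := {z | 16/(n:ℝ) ≤ fBad n z ^ 2} with hAdef
  have hA : MeasurableSet A :=
    measurableSet_le measurable_const ((measurable_fBad).pow_const 2)
  have hmk := mul_meas_ge_le_integral_of_nonneg (μ := muProd n)
    (f := fun z => fBad n z ^ 2) (Filter.Eventually.of_forall fun z => sq_nonneg _)
    (integrable_fBad_sq hn) (16/(n:ℝ))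
  rw [integral_fBad_sq hn] at hmk
  have hx : ((muProd n) A).toReal ≤ 1/4 := by
    have h0 : 0 ≤ ((muProd n) A).toReal := ENNReal.toReal_nonneg
    have key : 16/(n:ℝ) * ((muProd n) A).toReal ≤ 4/((n:ℝ)+4) := hmk
    rw [div_mul_eq_mul_div, div_le_div_iff₀ (by positivity) (by positivity)] at key
    nlinarith
  have hcompl : {z | |fBad n z| < 4 / Real.sqrt n} = Aᶜ := by
    ext z
    simp only [hAdef, mem_setOf_eq, mem_compl_iff, not_le]
    have ht : (4 / Real.sqrt (n:ℝ)) ^ 2 = 16/(n:ℝ) := by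
      rw [div_pow, Real.sq_sqrt hn0.le]
      norm_num
    have htpos : 0 < 4 / Real.sqrt (n:ℝ) := by positivity
    rw [← ht]
    constructor
    · intro h
      nlinarith [abs_nonneg (fBad n z), sq_abs (fBad n z)]
    · intro h
      nlinarith [abs_nonneg (fBad n z), sq_abs (fBad n z)]
  rw [hcompl, prob_compl_eq_one_sub hA, ENNReal.toReal_sub_of_le prob_le_one ENNReal.one_ne_top]
  simp only [ENNReal.toReal_one]
  linarith


end aux

/-- Section 5.1: the polynomial `f_n` on the product of two isotropic Euclidean balls has
variance at most `4/n`, yet `|f_n| < 4/√n` with probability at least `3/4`.  Consequently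
there is no dimension-free anti-concentration bound `μ_n(|f_n| < ε) ≤ C ε^α`. -/
theorem product_of_balls_pathological_polynomial :
    (∀ n : ℕ, 1 ≤ n →
      mVar (muProd n) (fBad n) ≤ 4 / n ∧
      3 / 4 ≤ ((muProd n) {z | |fBad n z| < 4 / Real.sqrt n}).toReal) ∧
    ¬ ∃ C : ℝ, 0 < C ∧ ∃ α : ℝ, 0 < α ∧
        ∀ n : ℕ, 1 ≤ n → ∀ ε : ℝ, 0 < ε →
          ((muProd n) {z | |fBad n z| < ε}).toReal ≤ C * ε ^ α := by
  constructor
  · exact fun n hn => ⟨mVar_bound hn, prob_bound hn⟩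
  · rintro ⟨C, hC, α, hα, h⟩
    -- choose t ∈ (0,1] with C * t^α ≤ 3/8
    set t : ℝ := min 1 ((3 / (8*C)) ^ (1/α)) with htdef
    have hb : (0:ℝ) < 3 / (8*C) := by positivity
    have ht0 : 0 < t := lt_min one_pos (Real.rpow_pos_of_pos hb _)
    have ht1 : t ≤ 1 := min_le_left _ _
    have htα : C * t ^ α ≤ 3/8 := by
      have h1 : t ^ α ≤ ((3 / (8*C)) ^ (1/α)) ^ α :=
        Real.rpow_le_rpow ht0.le (min_le_right _ _) hα.le
      have h2 : ((3 / (8*C)) ^ (1/α)) ^ α = 3 / (8*C) := by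
        rw [← Real.rpow_mul hb.le, one_div_mul_cancel hα.ne', Real.rpow_one]
      calc C * t ^ α ≤ C * (3 / (8*C)) :=
            mul_le_mul_of_nonneg_left (h1.trans (le_of_eq h2)) hC.le
        _ = 3/8 := by field_simp
    obtain ⟨n, hnt⟩ := exists_nat_gt (16 / t ^ 2)
    have hn1 : 1 ≤ n := by
      rcases Nat.eq_zero_or_pos n with h0 | h1
      · subst h0
        push_cast at hnt
        have hpos : 0 < 16 / t ^ 2 := by positivity
        linarith
      · exact h1
    have hn0 : (0:ℝ) < n := by exact_mod_cast hn1
    set ε : ℝ := 4 / Real.sqrt n with hεdef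
    have hε : 0 < ε := by positivity
    have hεt : ε ≤ t := by
      have hsq : (4/t) ^ 2 < (n:ℝ) := by
        rw [div_pow]
        norm_num
        convert hnt using 2
      have hs : 4 / t < Real.sqrt n := by
        rw [show (4:ℝ)/t = |4/t| from (abs_of_pos (by positivity)).symm, ← Real.sqrt_sq_eq_abs]
        exact Real.sqrt_lt_sqrt (sq_nonneg _) hsq
      rw [hεdef, div_le_iff₀ (Real.sqrt_pos.mpr hn0)]
      rw [div_lt_iff₀ ht0] at hs
      nlinarith [Real.sqrt_nonneg (n:ℝ)]
    have h1 := (h n hn1 ε hε)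
    have h2 := prob_bound hn1
    have h3 : C * ε ^ α ≤ C * t ^ α :=
      mul_le_mul_of_nonneg_left (Real.rpow_le_rpow hε.le hεt hα.le) hC.le
    linarith
end
end
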